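/- arXiv:1804.06240 — 3 statements merged into one kernel-verified Lean document; each statement's English description precedes it below -/
import Mathlib

section
/- In the group G_2 = ⟨x, y | x y^{-1} x^{-1} y x = y^{-2} x y x^{-1} y^{-1} x y^2⟩, the defining relation is equivalent to [x,y]^2 ([x,y]^2)^y = 1 modulo the second derived subgroup G_2''. That is, in the metabelianization G_2/G_2'', the relation becomes [x,y]^2 · y^{-1}[x,y]^2 y = 1. -/
/- STATEMENT 1: In `G₂ = ⟨x, y | x y⁻¹ x⁻¹ y x = y⁻² x y x⁻¹ y⁻¹ x y²⟩`, the defining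
   relation is equivalent, modulo the second derived subgroup, to the relation
   `[x,y]² ([x,y]²)^y = 1` (with `[a,b] = a⁻¹b⁻¹ab`, `a^b = b⁻¹ a b`):
   the normal closures of the two relators agree modulo the second derived subgroup of
   the free group, and in the metabelianization `G₂/G₂''` the word `[x,y]² y⁻¹[x,y]² y`
   becomes trivial. -/

namespace Stmt1

abbrev F := FreeGroup (Fin 2)

def x : F := FreeGroup.of 0
def y : F := FreeGroup.of 1

/-- The relator of `x y⁻¹ x⁻¹ y x = y⁻² x y x⁻¹ y⁻¹ x y²`. -/
def R : F :=
  x * y⁻¹ * x⁻¹ * y * x * (y⁻¹ * y⁻¹ * x * y * x⁻¹ * y⁻¹ * x * y * y)⁻¹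

/-- The commutator `[x,y] = x⁻¹ y⁻¹ x y`. -/
def c : F := x⁻¹ * y⁻¹ * x * y

/-- The word `[x,y]² ([x,y]²)^y`. -/
def w : F := c ^ 2 * (y⁻¹ * c ^ 2 * y)

abbrev G2 := PresentedGroup ({R} : Set F)

open scoped commutatorElement

/-- `a = y x y⁻¹ x⁻¹ ∈ F'`. -/
def a : F := ⁅y⁻¹, x⁆

/-- `b = y² x y⁻² x⁻¹ ∈ F'` (in multiplicative terms `⁅y⁻²,x⁆`). -/
def b : F := ⁅y⁻¹ * y⁻¹, x⁆

/-- The error term: `R = x * w⁻¹ * x⁻¹ * d`, and `d ∈ F''`. -/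
def d : F := ⁅a, b⁆ * ⁅b, b * a⁻¹⁆

lemma ha : a ∈ derivedSeries F 1 := by
  rw [derivedSeries_one, commutator_def]
  exact Subgroup.commutator_mem_commutator (Subgroup.mem_top _) (Subgroup.mem_top _)

lemma hb : b ∈ derivedSeries F 1 := by
  rw [derivedSeries_one, commutator_def]
  exact Subgroup.commutator_mem_commutator (Subgroup.mem_top _) (Subgroup.mem_top _)

lemma hd : d ∈ derivedSeries F 2 := by
  rw [show derivedSeries F 2 = ⁅derivedSeries F 1, derivedSeries F 1⁆ from derivedSeries_succ F 1]
  exact mul_mem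
    (Subgroup.commutator_mem_commutator ha hb)
    (Subgroup.commutator_mem_commutator hb (mul_mem hb (inv_mem ha)))

lemma key : R = x * w⁻¹ * x⁻¹ * d := by decide

lemma key' : w = x⁻¹ * (d * R⁻¹) * x := by
  rw [key]; group

theorem relation_metabelian :
    (Subgroup.normalClosure ({R} : Set F) ⊔ derivedSeries F 2 =
      Subgroup.normalClosure ({w} : Set F) ⊔ derivedSeries F 2) ∧
    (haveI : (derivedSeries G2 2).Normal := derivedSeries_normal _ _
     (QuotientGroup.mk' (derivedSeries G2 2)) (PresentedGroup.mk _ w) = 1) := by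
  haveI : (derivedSeries F 2).Normal := derivedSeries_normal _ _
  haveI : (derivedSeries G2 2).Normal := derivedSeries_normal _ _
  have hwcl : w ∈ Subgroup.normalClosure ({w} : Set F) :=
    Subgroup.subset_normalClosure (Set.mem_singleton w)
  have hRcl : R ∈ Subgroup.normalClosure ({R} : Set F) :=
    Subgroup.subset_normalClosure (Set.mem_singleton R)
  have hwmem : w ∈ Subgroup.normalClosure ({R} : Set F) ⊔ derivedSeries F 2 := by
    rw [key']
    have h1 : d * R⁻¹ ∈ Subgroup.normalClosure ({R} : Set F) ⊔ derivedSeries F 2 :=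
      mul_mem (Subgroup.mem_sup_right hd) (inv_mem (Subgroup.mem_sup_left hRcl))
    simpa using (Subgroup.sup_normal _ _).conj_mem _ h1 x⁻¹
  have hRmem : R ∈ Subgroup.normalClosure ({w} : Set F) ⊔ derivedSeries F 2 := by
    rw [key]
    refine mul_mem ?_ (Subgroup.mem_sup_right hd)
    exact (Subgroup.sup_normal _ _).conj_mem _ (inv_mem (Subgroup.mem_sup_left hwcl)) x
  constructor
  · exact le_antisymm
      (sup_le (Subgroup.normalClosure_le_normal (Set.singleton_subset_iff.mpr hRmem))
        le_sup_right)
      (sup_le (Subgroup.normalClosure_le_normal (Set.singleton_subset_iff.mpr hwmem))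
        le_sup_right)
  · have h1 : (PresentedGroup.mk ({R} : Set F)) R = 1 :=
      (QuotientGroup.eq_one_iff R).mpr hRcl
    have h2 : (PresentedGroup.mk ({R} : Set F)) d ∈ derivedSeries G2 2 :=
      map_derivedSeries_le_derivedSeries (PresentedGroup.mk _) 2 ⟨d, hd, rfl⟩
    have h3 : (PresentedGroup.mk ({R} : Set F)) w ∈ derivedSeries G2 2 := by
      rw [key', map_mul, map_mul, map_mul, map_inv, map_inv, h1]
      simpa using (derivedSeries_normal G2 2).conj_mem _ (by simpa using h2)
        ((PresentedGroup.mk ({R} : Set F)) x)⁻¹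
    exact (QuotientGroup.eq_one_iff _).mpr h3

end Stmt1
end

section
/- For any group G such that the abelianization of the commutator subgroup quotient γ_2(G)/γ_3(G) has exponent dividing 4, every quotient γ_k(G)/γ_{k+1}(G) for k ≥ 2 has exponent dividing 4, provided γ_2(G)/γ_3(G) has exponent dividing 4. More precisely: if g^4 ∈ γ_3(G) for all g ∈ γ_2(G), then for all k ≥ 2 and all h ∈ γ_k(G), h^4 ∈ γ_{k+1}(G). -/
/- STATEMENT 3: For any group G, if `g⁴ ∈ γ₃(G)` for all `g ∈ γ₂(G)`, then for every
   `k ≥ 2` and every `h ∈ γ_k(G)` we have `h⁴ ∈ γ_{k+1}(G)`.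
   Here `γ_k(G) = (⊤ : Subgroup G).lowerCentralSeries (k-1)`. -/

open scoped commutatorElement

private lemma comm_pow_aux {Q : Type*} [Group Q] (a b : Q)
    (hc : ∀ y : Q, Commute ⁅a, b⁆ y) : ∀ n : ℕ, ⁅a ^ n, b⁆ = ⁅a, b⁆ ^ n := by
  intro n
  induction n with
  | zero => simp
  | succ n ih =>
    have key : ⁅a ^ (n + 1), b⁆ = a * ⁅a ^ n, b⁆ * a⁻¹ * ⁅a, b⁆ := by
      rw [pow_succ']
      simp only [commutatorElement_def]
      group
    rw [key, ih, ← ((hc a).pow_left n).eq]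
    simp [mul_assoc, pow_succ]

theorem exponent_four_propagates (G : Type*) [Group G]
    (h4 : ∀ g ∈ (⊤ : Subgroup G).lowerCentralSeries 1, g ^ 4 ∈ (⊤ : Subgroup G).lowerCentralSeries 2) :
    ∀ k : ℕ, 2 ≤ k → ∀ h ∈ (⊤ : Subgroup G).lowerCentralSeries (k - 1),
      h ^ 4 ∈ (⊤ : Subgroup G).lowerCentralSeries k := by
  intro k hk
  induction k, hk using Nat.le_induction with
  | base => exact h4
  | succ k hk ih =>
    intro h hh
    simp only [Nat.add_sub_cancel] at hh
    obtain ⟨m, rfl⟩ : ∃ m, k = m + 1 := ⟨k - 1, (Nat.succ_pred_eq_of_pos (by omega)).symm⟩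
    simp only [Nat.add_sub_cancel] at ih
    set N := (⊤ : Subgroup G).lowerCentralSeries (m + 1 + 1) with hNdef
    let π := QuotientGroup.mk' N
    have hπone : ∀ z : G, π z = 1 ↔ z ∈ N := fun z => QuotientGroup.eq_one_iff z
    have central : ∀ x ∈ (⊤ : Subgroup G).lowerCentralSeries (m + 1), ∀ y : G, Commute (π x) (π y) := by
      intro x hx y
      rw [← commutatorElement_eq_one_iff_commute, ← map_commutatorElement]
      rw [hπone]
      rw [hNdef, Subgroup.lowerCentralSeries_succ]
      exact Subgroup.commutator_mem_commutator hx (Subgroup.mem_top y)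
    suffices hs : π (h ^ 4) = 1 by
      rw [hπone] at hs
      exact hs
    rw [map_pow]
    rw [Subgroup.lowerCentralSeries_succ] at hh
    induction hh using Subgroup.closure_induction with
    | mem g hg =>
      obtain ⟨x, hx, y, -, rfl⟩ := hg
      have hc : ∀ z : G⧸N, Commute ⁅π x, π y⁆ z := by
        intro z
        obtain ⟨w, rfl⟩ := QuotientGroup.mk'_surjective N z
        rw [← map_commutatorElement]
        apply central
        rw [Subgroup.lowerCentralSeries_succ]
        exact Subgroup.commutator_mem_commutator hx (Subgroup.mem_top y)
      show π ⁅x, y⁆ ^ 4 = 1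
      rw [map_commutatorElement, ← comm_pow_aux (π x) (π y) hc 4, ← map_pow]
      have hx4 : x ^ 4 ∈ (⊤ : Subgroup G).lowerCentralSeries (m + 1) := ih x hx
      rw [← map_commutatorElement, hπone, hNdef, Subgroup.lowerCentralSeries_succ]
      exact Subgroup.commutator_mem_commutator hx4 (Subgroup.mem_top y)
    | one => simp
    | mul a b ha hb iha ihb =>
      have hab : Commute (π a) (π b) := by
        apply central a (by rw [Subgroup.lowerCentralSeries_succ]; exact ha)
      rw [map_mul, hab.mul_pow, iha, ihb, one_mul]
    | inv a ha iha =>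
      rw [map_inv, inv_pow, iha, inv_one]
end

section
/- The vector (a + d - ad, 1 + cd + c^2 d, d - c^2 d - c^2 a + c^2 a^2) of elements of the Laurent polynomial ring Z[a^{±1}, c^{±1}, d^{±1}] is not unimodular: the ideal generated by these three elements does not contain 1. -/
/- STATEMENT 16: In the Laurent polynomial ring `ℤ[a^{±1}, c^{±1}, d^{±1}]`
   (realized as `AddMonoidAlgebra ℤ (ℤ × ℤ × ℤ)`), the vector
   `(a + d - ad, 1 + cd + c²d, d - c²d - c²a + c²a²)` is not unimodular:
   the ideal generated by these three elements does not contain 1. -/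

namespace Stmt16

abbrev L := AddMonoidAlgebra ℤ (ℤ × ℤ × ℤ)

noncomputable def m (p : ℤ × ℤ × ℤ) : L := AddMonoidAlgebra.single p 1

noncomputable def a : L := m (1, 0, 0)
noncomputable def c : L := m (0, 1, 0)
noncomputable def d : L := m (0, 0, 1)

lemma exists_zero : ∃ A C D : ℂ, A ≠ 0 ∧ C ≠ 0 ∧ D ≠ 0 ∧
    A + D - A * D = 0 ∧ 1 + C * D + C ^ 2 * D = 0 ∧
    D - C ^ 2 * D - C ^ 2 * A + C ^ 2 * A ^ 2 = 0 := by
  have hdeg : 0 < (Polynomial.X ^ 3 - Polynomial.X ^ 2 - Polynomial.X - 1 : Polynomial ℂ).degree := by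
    have h3 : (Polynomial.X ^ 3 - Polynomial.X ^ 2 - Polynomial.X - 1 : Polynomial ℂ).degree = 3 := by
      compute_degree!
    rw [h3]; decide
  obtain ⟨C, hC⟩ := Complex.exists_root hdeg
  have hcube : C ^ 3 = C ^ 2 + C + 1 := by
    have h := hC
    simp [Polynomial.IsRoot] at h
    linear_combination h
  have hC0 : C ≠ 0 := by
    intro h; rw [h] at hcube; norm_num at hcube
  have hC1 : C + 1 ≠ 0 := by
    intro h
    have : C = -1 := by linear_combination h
    rw [this] at hcube; norm_num at hcube
  have hCC : C ^ 2 + C ≠ 0 := by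
    intro h
    rcases mul_eq_zero.mp (by linear_combination h : C * (C + 1) = 0) with h' | h'
    · exact hC0 h'
    · exact hC1 h'
  have hCC1 : C ^ 2 + C + 1 ≠ 0 := by
    intro h
    have h3 : C ^ 3 = 0 := by rw [hcube, h]
    exact hC0 (pow_eq_zero_iff (by norm_num)|>.mp h3)
  refine ⟨(C ^ 2 + C + 1)⁻¹, C, -(C ^ 2 + C)⁻¹, inv_ne_zero hCC1, hC0, neg_ne_zero.mpr (inv_ne_zero hCC), ?_, ?_, ?_⟩
  · linear_combination (C ^ 2 + C)⁻¹ * mul_inv_cancel₀ hCC1 - (C ^ 2 + C + 1)⁻¹ * mul_inv_cancel₀ hCC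
  · field_simp
    ring
  · rw [← hcube]
    field_simp
    linear_combination (C ^ 2 - 1) * hcube
  

noncomputable def φ (A C D : ℂ) (hA : A ≠ 0) (hC : C ≠ 0) (hD : D ≠ 0) :
    Multiplicative (ℤ × ℤ × ℤ) →* ℂ where
  toFun x := A ^ x.toAdd.1 * C ^ x.toAdd.2.1 * D ^ x.toAdd.2.2
  map_one' := by simp
  map_mul' x y := by
    simp only [toAdd_mul, Prod.fst_add, Prod.snd_add, zpow_add₀ hA, zpow_add₀ hC, zpow_add₀ hD]
    ring

theorem not_unimodular :
    (1 : L) ∉ Ideal.span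
      ({a + d - a * d, 1 + c * d + c ^ 2 * d,
        d - c ^ 2 * d - c ^ 2 * a + c ^ 2 * a ^ 2} : Set L) := by
  intro hmem
  obtain ⟨A, C, D, hA, hC, hD, h1, h2, h3⟩ := exists_zero
  set ψ : L →+* ℂ :=
    (AddMonoidAlgebra.lift ℤ ℂ (ℤ × ℤ × ℤ) (φ A C D hA hC hD)).toRingHom with hψ
  have ea : ψ a = A := by
    simp [hψ, a, m, AddMonoidAlgebra.lift_single, φ]
  have ec : ψ c = C := by
    simp [hψ, c, m, AddMonoidAlgebra.lift_single, φ]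
  have ed : ψ d = D := by
    simp [hψ, d, m, AddMonoidAlgebra.lift_single, φ]
  have z1 : ψ (a + d - a * d) = 0 := by
    rw [map_sub, map_add, map_mul, ea, ed]; exact h1
  have z2 : ψ (1 + c * d + c ^ 2 * d) = 0 := by
    rw [map_add, map_add, map_one, map_mul, map_mul, map_pow, ec, ed]; exact h2
  have z3 : ψ (d - c ^ 2 * d - c ^ 2 * a + c ^ 2 * a ^ 2) = 0 := by
    rw [map_add, map_sub, map_sub, map_mul, map_mul, map_mul, map_pow, map_pow, ea, ec, ed]
    exact h3
  have himg : (1 : ℂ) ∈ Ideal.map ψ (Ideal.span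
      ({a + d - a * d, 1 + c * d + c ^ 2 * d,
        d - c ^ 2 * d - c ^ 2 * a + c ^ 2 * a ^ 2} : Set L)) := by
    simpa using Ideal.mem_map_of_mem ψ hmem
  rw [Ideal.map_span] at himg
  have hle : Ideal.span (ψ '' ({a + d - a * d, 1 + c * d + c ^ 2 * d,
        d - c ^ 2 * d - c ^ 2 * a + c ^ 2 * a ^ 2} : Set L)) ≤ ⊥ := by
    rw [Ideal.span_le]
    rintro x ⟨y, hy, rfl⟩
    simp only [Set.mem_insert_iff, Set.mem_singleton_iff] at hy
    rcases hy with rfl | rfl | rfl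
    · exact z1
    · exact z2
    · exact z3
  exact one_ne_zero (Ideal.mem_bot.mp (hle himg))

end Stmt16
end
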